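/- Let σ : ℝ^d → ℝ be a twice-differentiable even function (σ(−x) = σ(x)) with ∫ σ = 1 and ‖∇^j σ(x)‖ ≤ C′/(c^{−1} + ‖x‖^d)^{1+ε+j/d} for j = 0, 1, 2 and all x ∈ ℝ^d, for some constants C′ > 0, c > 0, 0 < ε ≤ 1/d. Then the kernels S_k(x,b) = 2^k σ(2^{k/d}(x−b)), k ∈ ℤ, form a family of averaging kernels: they are symmetric, satisfy ∫ S_k(x,b) db = 1, the size estimate |S_k(x,b)| ≤ C·2^{−kε}/(2^{−k}+ρ(x,b))^{1+ε}, the Hölder continuity estimate with exponent η = 1/d, and the double Lipschitz condition, for some constant C depending only on c, d, ε, C′. -/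

import Mathlib

open MeasureTheory

private lemma seg_aux {E : Type*} [NormedAddCommGroup E] [NormedSpace ℝ E]
    {x x' ξ : E} (h : ξ ∈ segment ℝ x' x) : ‖x - ξ‖ ≤ ‖x - x'‖ := by
  obtain ⟨a, b, ha, hb, hab, rfl⟩ := h
  have hx : x - (a • x' + b • x) = a • (x - x') := by
    have hb' : b = 1 - a := by linarith
    subst hb'
    module
  rw [hx, norm_smul, Real.norm_eq_abs, abs_of_nonneg ha]
  exact mul_le_of_le_one_left (norm_nonneg _) (by linarith)

private lemma keyA (d : ℕ) (hd : 1 ≤ d) {s r h w : ℝ} (hs : 0 < s) (hr : 0 ≤ r)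
    (hh : 0 ≤ h) (hw : 0 ≤ w)
    (hle : h ^ d ≤ ((3:ℝ)^d)⁻¹ * (s ^ d + r ^ d)) (hrw : r - h ≤ w) :
    ((3:ℝ)^d)⁻¹ * (s ^ d + r ^ d) ≤ s ^ d + w ^ d := by
  have hd0 : d ≠ 0 := by omega
  have hT3 : (3:ℝ) ≤ 3 ^ d := by
    calc (3:ℝ) = 3 ^ 1 := (pow_one 3).symm
    _ ≤ 3 ^ d := pow_le_pow_right₀ (by norm_num) hd
  have hT0 : (0:ℝ) < 3 ^ d := by positivity
  have h1 : h ^ d ≤ ((s + r) / 3) ^ d := by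
    rw [div_pow]
    calc h ^ d ≤ ((3:ℝ)^d)⁻¹ * (s ^ d + r ^ d) := hle
    _ ≤ ((3:ℝ)^d)⁻¹ * ((s + r) ^ d) := by
        gcongr
        exact pow_add_pow_le hs.le hr hd0
    _ = (s + r) ^ d / 3 ^ d := by ring
  have h2 : h ≤ (s + r) / 3 :=
    (pow_le_pow_iff_left₀ hh (by positivity) hd0).mp h1
  rcases le_or_gt r s with hrs | hrs
  · have hrd : r ^ d ≤ s ^ d := pow_le_pow_left₀ hr hrs d
    have hwd : 0 ≤ w ^ d := pow_nonneg hw d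
    rw [inv_mul_le_iff₀ hT0]
    nlinarith [pow_nonneg hs.le d]
  · have hw3 : r / 3 ≤ w := by linarith
    have hwd : (r/3) ^ d ≤ w ^ d := pow_le_pow_left₀ (by positivity) hw3 d
    rw [div_pow] at hwd
    have hTi : ((3:ℝ)^d)⁻¹ ≤ 1 := by
      rw [inv_le_one_iff₀]; right; linarith
    have hTi0 : (0:ℝ) < ((3:ℝ)^d)⁻¹ := by positivity
    have hsd : 0 ≤ s ^ d := pow_nonneg hs.le d
    have : ((3:ℝ)^d)⁻¹ * r ^ d ≤ w ^ d := by
      rw [inv_mul_le_iff₀ hT0]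
      rw [div_le_iff₀ hT0] at hwd
      linarith
    nlinarith

private lemma keyB (d : ℕ) (hd : 1 ≤ d) {s r h₁ h₂ w : ℝ} (hs : 0 < s) (hr : 0 ≤ r)
    (hh₁ : 0 ≤ h₁) (hh₂ : 0 ≤ h₂) (hw : 0 ≤ w)
    (hle₁ : h₁ ^ d ≤ ((3:ℝ)^d)⁻¹ * (s ^ d + r ^ d))
    (hle₂ : h₂ ^ d ≤ ((3:ℝ)^d)⁻¹ * (s ^ d + r ^ d))
    (hrw : r - h₁ - h₂ ≤ w) :
    (((3:ℝ)^d)^2)⁻¹ * (s ^ d + r ^ d) ≤ s ^ d + w ^ d := by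
  have hd0 : d ≠ 0 := by omega
  have hT3 : (3:ℝ) ≤ 3 ^ d := by
    calc (3:ℝ) = 3 ^ 1 := (pow_one 3).symm
    _ ≤ 3 ^ d := pow_le_pow_right₀ (by norm_num) hd
  have hT0 : (0:ℝ) < 3 ^ d := by positivity
  have step : ∀ h : ℝ, 0 ≤ h → h ^ d ≤ ((3:ℝ)^d)⁻¹ * (s ^ d + r ^ d) → h ≤ (s + r) / 3 := by
    intro h hh hle
    have h1 : h ^ d ≤ ((s + r) / 3) ^ d := by
      rw [div_pow]
      calc h ^ d ≤ ((3:ℝ)^d)⁻¹ * (s ^ d + r ^ d) := hle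
      _ ≤ ((3:ℝ)^d)⁻¹ * ((s + r) ^ d) := by
          gcongr
          exact pow_add_pow_le hs.le hr hd0
      _ = (s + r) ^ d / 3 ^ d := by ring
    exact (pow_le_pow_iff_left₀ hh (by positivity) hd0).mp h1
  have h2₁ := step h₁ hh₁ hle₁
  have h2₂ := step h₂ hh₂ hle₂
  have h9 : ((3:ℝ)^d)^2 = 9 ^ d := by
    rw [← pow_mul, mul_comm, pow_mul]; norm_num
  have hT20 : (0:ℝ) < ((3:ℝ)^d)^2 := by positivity
  rcases le_or_gt r (3*s) with hrs | hrs
  · have hrd : r ^ d ≤ 3^d * s ^ d := by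
      calc r ^ d ≤ (3*s) ^ d := pow_le_pow_left₀ hr hrs d
      _ = 3^d * s^d := mul_pow 3 s d
    have hwd : 0 ≤ w ^ d := pow_nonneg hw d
    rw [inv_mul_le_iff₀ hT20]
    have h5 : (1:ℝ) + 3^d ≤ ((3:ℝ)^d)^2 := by nlinarith
    have h6 := mul_le_mul_of_nonneg_right h5 (pow_nonneg hs.le d)
    nlinarith [mul_nonneg hT20.le hwd]
  · have hw9 : r / 9 ≤ w := by linarith
    have hwd : (r/9) ^ d ≤ w ^ d := pow_le_pow_left₀ (by positivity) hw9 d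
    rw [div_pow, ← h9] at hwd
    have hsd : 0 ≤ s ^ d := pow_nonneg hs.le d
    have hT21 : (1:ℝ) ≤ ((3:ℝ)^d)^2 := by nlinarith
    have h' : (((3:ℝ)^d)^2)⁻¹ * r ^ d ≤ w ^ d := by
      rw [inv_mul_le_iff₀ hT20]
      rw [div_le_iff₀ hT20] at hwd
      linarith
    have hTi : (((3:ℝ)^d)^2)⁻¹ ≤ 1 := by
      rw [inv_le_one_iff₀]; right; exact hT21
    have hTi0 : (0:ℝ) < (((3:ℝ)^d)^2)⁻¹ := by positivity
    nlinarith

private lemma rpow_pow_cancel {x : ℝ} (hx : 0 < x) {d : ℕ} (hd : d ≠ 0) :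
    (x ^ ((1:ℝ)/d)) ^ d = x := by
  rw [← Real.rpow_natCast (x ^ ((1:ℝ)/d)) d, ← Real.rpow_mul hx.le, one_div,
    inv_mul_cancel₀ (Nat.cast_ne_zero.mpr hd), Real.rpow_one]

private lemma pow_rpow_cancel {h : ℝ} (hh : 0 ≤ h) {d : ℕ} (hd : d ≠ 0) :
    ((h ^ d : ℝ)) ^ ((1:ℝ)/d) = h := by
  rw [← Real.rpow_natCast h d, ← Real.rpow_mul hh, mul_one_div,
    div_self (Nat.cast_ne_zero.mpr hd), Real.rpow_one]

private lemma boundA {C' c ε P D Cb : ℝ} (hC' : 0 < C') (hc : 0 < c) (hP : 0 < P)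
    (hD : 0 < D) (hCb : C' * (c * c ^ ε) ≤ Cb) :
    P * (C' / (P * D / c) ^ ((1:ℝ) + ε)) ≤ Cb * P ^ (-ε) / D ^ ((1:ℝ) + ε) := by
  have h1 : ∀ z : ℝ, 0 < z → z ^ ((1:ℝ) + ε) = z * z ^ ε := fun z hz => by
    rw [Real.rpow_add hz, Real.rpow_one]
  have hPe : (0:ℝ) < P ^ ε := Real.rpow_pos_of_pos hP ε
  have hce : (0:ℝ) < c ^ ε := Real.rpow_pos_of_pos hc ε
  have hDe : (0:ℝ) < D ^ ε := Real.rpow_pos_of_pos hD ε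
  have e1 : (P * D / c) ^ ((1:ℝ) + ε) = (P * P^ε) * (D * D^ε) / (c * c^ε) := by
    rw [Real.div_rpow (by positivity) hc.le, Real.mul_rpow hP.le hD.le,
      h1 P hP, h1 D hD, h1 c hc]
  have eL : P * (C' / (P * D / c) ^ ((1:ℝ) + ε))
      = (C' * (c * c^ε)) * ((P^ε)⁻¹ / (D * D^ε)) := by
    rw [e1]
    field_simp
  have eR : Cb * P ^ (-ε) / D ^ ((1:ℝ) + ε) = Cb * ((P^ε)⁻¹ / (D * D^ε)) := by
    rw [h1 D hD, Real.rpow_neg hP.le]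
    ring
  rw [eL, eR]
  exact mul_le_mul_of_nonneg_right hCb (by positivity)

private lemma boundB {d : ℕ} (hd : 1 ≤ d) {C' c ε P D h T Cb : ℝ} (hC' : 0 < C')
    (hc : 0 < c) (hP : 0 < P) (hD : 0 < D) (hh : 0 ≤ h) (hT : 0 < T)
    (hCb : C' * (c * c ^ ε) * (T * T ^ ε * T ^ ((1:ℝ)/d)) ≤ Cb) :
    P * (P ^ ((1:ℝ)/d) * (C' / (P * D / (c * T)) ^ ((1:ℝ) + ε + (1:ℝ)/d)) * h) ≤
      Cb * (c * h ^ d / D) ^ ((1:ℝ)/d) * (P ^ (-ε) / D ^ ((1:ℝ) + ε)) := by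
  have hd0 : d ≠ 0 := by omega
  have h1 : ∀ z : ℝ, 0 < z → z ^ ((1:ℝ) + ε + (1:ℝ)/d) = z * z ^ ε * z ^ ((1:ℝ)/d) :=
    fun z hz => by
      rw [Real.rpow_add hz, Real.rpow_add hz, Real.rpow_one]
  have hPe : (0:ℝ) < P ^ ε := Real.rpow_pos_of_pos hP ε
  have hce : (0:ℝ) < c ^ ε := Real.rpow_pos_of_pos hc ε
  have hDe : (0:ℝ) < D ^ ε := Real.rpow_pos_of_pos hD ε
  have hTe : (0:ℝ) < T ^ ε := Real.rpow_pos_of_pos hT ε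
  have hPd : (0:ℝ) < P ^ ((1:ℝ)/d) := Real.rpow_pos_of_pos hP _
  have hcd : (0:ℝ) < c ^ ((1:ℝ)/d) := Real.rpow_pos_of_pos hc _
  have hDd : (0:ℝ) < D ^ ((1:ℝ)/d) := Real.rpow_pos_of_pos hD _
  have hTd : (0:ℝ) < T ^ ((1:ℝ)/d) := Real.rpow_pos_of_pos hT _
  have e1 : (P * D / (c * T)) ^ ((1:ℝ) + ε + (1:ℝ)/d)
      = (P * P^ε * P^((1:ℝ)/d)) * (D * D^ε * D^((1:ℝ)/d))
        / ((c * c^ε * c^((1:ℝ)/d)) * (T * T^ε * T^((1:ℝ)/d))) := by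
    rw [Real.div_rpow (by positivity) (by positivity), Real.mul_rpow hP.le hD.le,
      Real.mul_rpow hc.le hT.le, h1 P hP, h1 D hD, h1 c hc, h1 T hT]
  have e2 : (c * h ^ d / D) ^ ((1:ℝ)/d) = c^((1:ℝ)/d) * h / D^((1:ℝ)/d) := by
    rw [Real.div_rpow (by positivity) hD.le, Real.mul_rpow hc.le (by positivity),
      pow_rpow_cancel hh hd0]
  have eL : P * (P ^ ((1:ℝ)/d) * (C' / (P * D / (c * T)) ^ ((1:ℝ) + ε + (1:ℝ)/d)) * h)
      = (C' * (c * c^ε) * (T * T^ε * T^((1:ℝ)/d)))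
        * (c^((1:ℝ)/d) * h * (P^ε)⁻¹ / (D * D^ε * D^((1:ℝ)/d))) := by
    rw [e1]
    field_simp
  have eR : Cb * (c * h ^ d / D) ^ ((1:ℝ)/d) * (P ^ (-ε) / D ^ ((1:ℝ) + ε))
      = Cb * (c^((1:ℝ)/d) * h * (P^ε)⁻¹ / (D * D^ε * D^((1:ℝ)/d))) := by
    rw [e2, Real.rpow_add hD, Real.rpow_one, Real.rpow_neg hP.le]
    field_simp
  rw [eL, eR]
  exact mul_le_mul_of_nonneg_right hCb (by positivity)

private lemma boundC {d : ℕ} (hd : 1 ≤ d) {C' c ε P D h₁ h₂ T Cb : ℝ} (hC' : 0 < C')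
    (hc : 0 < c) (hP : 0 < P) (hD : 0 < D) (hh₁ : 0 ≤ h₁) (hh₂ : 0 ≤ h₂) (hT : 0 < T)
    (hCb : C' * (c * c ^ ε) * (T * T ^ ε * T ^ ((1:ℝ)/d) * T ^ ((1:ℝ)/d)) ≤ Cb) :
    P * (P ^ ((1:ℝ)/d) * (P ^ ((1:ℝ)/d) * (C' / (P * D / (c * T)) ^ ((1:ℝ) + ε + 2/d)) * h₂) * h₁) ≤
      Cb * (c * h₁ ^ d / D) ^ ((1:ℝ)/d) * (c * h₂ ^ d / D) ^ ((1:ℝ)/d)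
        * (P ^ (-ε) / D ^ ((1:ℝ) + ε)) := by
  have hd0 : d ≠ 0 := by omega
  have h1 : ∀ z : ℝ, 0 < z → z ^ ((1:ℝ) + ε + 2/d) = z * z ^ ε * z ^ ((1:ℝ)/d) * z ^ ((1:ℝ)/d) :=
    fun z hz => by
      rw [show ((1:ℝ) + ε + 2/d) = (1:ℝ) + ε + ((1:ℝ)/d + (1:ℝ)/d) by ring,
        Real.rpow_add hz, Real.rpow_add hz, Real.rpow_add hz, Real.rpow_one]
      ring
  have hPe : (0:ℝ) < P ^ ε := Real.rpow_pos_of_pos hP ε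
  have hce : (0:ℝ) < c ^ ε := Real.rpow_pos_of_pos hc ε
  have hDe : (0:ℝ) < D ^ ε := Real.rpow_pos_of_pos hD ε
  have hTe : (0:ℝ) < T ^ ε := Real.rpow_pos_of_pos hT ε
  have hPd : (0:ℝ) < P ^ ((1:ℝ)/d) := Real.rpow_pos_of_pos hP _
  have hcd : (0:ℝ) < c ^ ((1:ℝ)/d) := Real.rpow_pos_of_pos hc _
  have hDd : (0:ℝ) < D ^ ((1:ℝ)/d) := Real.rpow_pos_of_pos hD _
  have hTd : (0:ℝ) < T ^ ((1:ℝ)/d) := Real.rpow_pos_of_pos hT _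
  have e1 : (P * D / (c * T)) ^ ((1:ℝ) + ε + 2/d)
      = (P * P^ε * P^((1:ℝ)/d) * P^((1:ℝ)/d)) * (D * D^ε * D^((1:ℝ)/d) * D^((1:ℝ)/d))
        / ((c * c^ε * c^((1:ℝ)/d) * c^((1:ℝ)/d)) * (T * T^ε * T^((1:ℝ)/d) * T^((1:ℝ)/d))) := by
    rw [Real.div_rpow (by positivity) (by positivity), Real.mul_rpow hP.le hD.le,
      Real.mul_rpow hc.le hT.le, h1 P hP, h1 D hD, h1 c hc, h1 T hT]
  have e2 : ∀ h : ℝ, 0 ≤ h → (c * h ^ d / D) ^ ((1:ℝ)/d) = c^((1:ℝ)/d) * h / D^((1:ℝ)/d) := by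
    intro h hh
    rw [Real.div_rpow (by positivity) hD.le, Real.mul_rpow hc.le (by positivity),
      pow_rpow_cancel hh hd0]
  have eL : P * (P ^ ((1:ℝ)/d) * (P ^ ((1:ℝ)/d) * (C' / (P * D / (c * T)) ^ ((1:ℝ) + ε + 2/d)) * h₂) * h₁)
      = (C' * (c * c^ε) * (T * T^ε * T^((1:ℝ)/d) * T^((1:ℝ)/d)))
        * (c^((1:ℝ)/d) * h₁ * (c^((1:ℝ)/d) * h₂) * (P^ε)⁻¹
            / (D * D^ε * D^((1:ℝ)/d) * D^((1:ℝ)/d))) := by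
    rw [e1]
    field_simp
  have eR : Cb * (c * h₁ ^ d / D) ^ ((1:ℝ)/d) * (c * h₂ ^ d / D) ^ ((1:ℝ)/d)
        * (P ^ (-ε) / D ^ ((1:ℝ) + ε))
      = Cb * (c^((1:ℝ)/d) * h₁ * (c^((1:ℝ)/d) * h₂) * (P^ε)⁻¹
            / (D * D^ε * D^((1:ℝ)/d) * D^((1:ℝ)/d))) := by
    rw [e2 h₁ hh₁, e2 h₂ hh₂, Real.rpow_add hD, Real.rpow_one, Real.rpow_neg hP.le]
    field_simp
  rw [eL, eR]
  exact mul_le_mul_of_nonneg_right hCb (by positivity)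

set_option maxHeartbeats 2000000 in
theorem stmt_6 (d : ℕ) (hd : 1 ≤ d) (σ : EuclideanSpace ℝ (Fin d) → ℝ)
    (C' c ε : ℝ) (hC' : 0 < C') (hc : 0 < c) (hε : 0 < ε) (hεd : ε ≤ 1 / d)
    (hsmooth : ContDiff ℝ 2 σ)
    (heven : ∀ x, σ (-x) = σ x)
    (hint : Integrable σ) (hnorm : ∫ x, σ x = 1)
    (hdecay : ∀ j ≤ 2, ∀ x, ‖iteratedFDeriv ℝ j σ x‖ ≤
      C' / (c⁻¹ + ‖x‖ ^ d) ^ (1 + ε + (j : ℝ) / d)) :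
    -- S_k(x,b) = 2^k σ(2^{k/d}(x-b)),  ρ(x,b) = c‖x-b‖^d
    ∃ C : ℝ, 0 < C ∧
      (∀ (S : ℤ → EuclideanSpace ℝ (Fin d) → EuclideanSpace ℝ (Fin d) → ℝ),
        (∀ k x b, S k x b = (2 : ℝ) ^ k * σ ((2 : ℝ) ^ ((k : ℝ) / d) • (x - b))) →
        -- symmetry
        (∀ k x b, S k x b = S k b x) ∧
        -- (C1)
        (∀ k x, ∫ b, S k x b = 1) ∧
        -- (C2)
        (∀ k x b, |S k x b| ≤
          C * (2 : ℝ) ^ (-(k : ℝ) * ε) / ((2 : ℝ) ^ (-k) + c * ‖x - b‖ ^ d) ^ (1 + ε)) ∧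
        -- (C3), with A = 3^d / 2, η = 1/d
        (∀ k x x' b,
          c * ‖x - x'‖ ^ d ≤ (3 : ℝ) ^ (-(d : ℤ)) * ((2 : ℝ) ^ (-k) + c * ‖x - b‖ ^ d) →
          |S k x b - S k x' b| ≤
            C * (c * ‖x - x'‖ ^ d / ((2 : ℝ) ^ (-k) + c * ‖x - b‖ ^ d)) ^ ((1 : ℝ) / d) *
              ((2 : ℝ) ^ (-(k : ℝ) * ε) / ((2 : ℝ) ^ (-k) + c * ‖x - b‖ ^ d) ^ (1 + ε))) ∧
        -- (C4) double Lipschitz condition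
        (∀ k x x' b b',
          c * ‖x - x'‖ ^ d ≤ (3 : ℝ) ^ (-(d : ℤ)) * ((2 : ℝ) ^ (-k) + c * ‖x - b‖ ^ d) →
          c * ‖b - b'‖ ^ d ≤ (3 : ℝ) ^ (-(d : ℤ)) * ((2 : ℝ) ^ (-k) + c * ‖x - b‖ ^ d) →
          |S k x b - S k x' b - S k x b' + S k x' b'| ≤
            C * (c * ‖x - x'‖ ^ d / ((2 : ℝ) ^ (-k) + c * ‖x - b‖ ^ d)) ^ ((1 : ℝ) / d) *
              (c * ‖b - b'‖ ^ d / ((2 : ℝ) ^ (-k) + c * ‖x - b‖ ^ d)) ^ ((1 : ℝ) / d) *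
              ((2 : ℝ) ^ (-(k : ℝ) * ε) / ((2 : ℝ) ^ (-k) + c * ‖x - b‖ ^ d) ^ (1 + ε)))) := by
  have hdn0 : d ≠ 0 := by omega
  have hd0 : (d:ℝ) ≠ 0 := Nat.cast_ne_zero.mpr hdn0
  have hσdiff : Differentiable ℝ σ := hsmooth.differentiable (by norm_num)
  have hσ'diff : Differentiable ℝ (fderiv ℝ σ) :=
    (hsmooth.fderiv_right (m := 1) (by norm_num)).differentiable (by norm_num)
  have hn1 : ∀ y : EuclideanSpace ℝ (Fin d), ‖fderiv ℝ σ y‖ = ‖iteratedFDeriv ℝ 1 σ y‖ := fun y =>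
    (norm_iteratedFDeriv_zero).symm.trans norm_iteratedFDeriv_fderiv
  have hn2 : ∀ y : EuclideanSpace ℝ (Fin d), ‖fderiv ℝ (fderiv ℝ σ) y‖ = ‖iteratedFDeriv ℝ 2 σ y‖ := fun y =>
    ((norm_iteratedFDeriv_zero).symm.trans norm_iteratedFDeriv_fderiv).trans
      norm_iteratedFDeriv_fderiv
  have hdec0 : ∀ y : EuclideanSpace ℝ (Fin d), |σ y| ≤ C' / (c⁻¹ + ‖y‖ ^ d) ^ ((1:ℝ) + ε) := by
    intro y
    have h := hdecay 0 (by norm_num) y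
    rw [norm_iteratedFDeriv_zero, Real.norm_eq_abs] at h
    simpa using h
  have hdec1 : ∀ y : EuclideanSpace ℝ (Fin d), ‖fderiv ℝ σ y‖ ≤ C' / (c⁻¹ + ‖y‖ ^ d) ^ ((1:ℝ)+ε+1/(d:ℝ)) := by
    intro y
    have h := hdecay 1 (by norm_num) y
    rw [← hn1] at h
    simpa using h
  have hdec2 : ∀ y : EuclideanSpace ℝ (Fin d), ‖fderiv ℝ (fderiv ℝ σ) y‖ ≤ C' / (c⁻¹ + ‖y‖ ^ d) ^ ((1:ℝ)+ε+2/(d:ℝ)) := by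
    intro y
    have h := hdecay 2 le_rfl y
    rw [← hn2] at h
    simpa using h
  have hce : (0:ℝ) < c ^ ε := Real.rpow_pos_of_pos hc ε
  have hT : (0:ℝ) < (3:ℝ)^d := by positivity
  have hBpos : (0:ℝ) < C' * (c * c^ε) := by positivity
  have hXXpos : (0:ℝ) < ((3:ℝ)^d * ((3:ℝ)^d)^ε * ((3:ℝ)^d)^((1:ℝ)/(d:ℝ))) := by positivity
  have hYYpos : (0:ℝ) < (((3:ℝ)^d)^2 * (((3:ℝ)^d)^2)^ε * (((3:ℝ)^d)^2)^((1:ℝ)/(d:ℝ)) * (((3:ℝ)^d)^2)^((1:ℝ)/(d:ℝ))) := by positivity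
  have hCb2 : C' * (c * c^ε) ≤ C' * (c * c^ε) * (1 + ((3:ℝ)^d * ((3:ℝ)^d)^ε * ((3:ℝ)^d)^((1:ℝ)/(d:ℝ))) + (((3:ℝ)^d)^2 * (((3:ℝ)^d)^2)^ε * (((3:ℝ)^d)^2)^((1:ℝ)/(d:ℝ)) * (((3:ℝ)^d)^2)^((1:ℝ)/(d:ℝ)))) := by nlinarith
  have hCb3 : C' * (c * c^ε) * ((3:ℝ)^d * ((3:ℝ)^d)^ε * ((3:ℝ)^d)^((1:ℝ)/(d:ℝ))) ≤ C' * (c * c^ε) * (1 + ((3:ℝ)^d * ((3:ℝ)^d)^ε * ((3:ℝ)^d)^((1:ℝ)/(d:ℝ))) + (((3:ℝ)^d)^2 * (((3:ℝ)^d)^2)^ε * (((3:ℝ)^d)^2)^((1:ℝ)/(d:ℝ)) * (((3:ℝ)^d)^2)^((1:ℝ)/(d:ℝ)))) := by nlinarith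
  have hCb4 : C' * (c * c^ε) * (((3:ℝ)^d)^2 * (((3:ℝ)^d)^2)^ε * (((3:ℝ)^d)^2)^((1:ℝ)/(d:ℝ)) * (((3:ℝ)^d)^2)^((1:ℝ)/(d:ℝ))) ≤ C' * (c * c^ε) * (1 + ((3:ℝ)^d * ((3:ℝ)^d)^ε * ((3:ℝ)^d)^((1:ℝ)/(d:ℝ))) + (((3:ℝ)^d)^2 * (((3:ℝ)^d)^2)^ε * (((3:ℝ)^d)^2)^((1:ℝ)/(d:ℝ)) * (((3:ℝ)^d)^2)^((1:ℝ)/(d:ℝ)))) := by nlinarith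
  refine ⟨C' * (c * c^ε) * (1 + ((3:ℝ)^d * ((3:ℝ)^d)^ε * ((3:ℝ)^d)^((1:ℝ)/(d:ℝ))) + (((3:ℝ)^d)^2 * (((3:ℝ)^d)^2)^ε * (((3:ℝ)^d)^2)^((1:ℝ)/(d:ℝ)) * (((3:ℝ)^d)^2)^((1:ℝ)/(d:ℝ)))), by positivity, ?_⟩
  intro S hS
  refine ⟨?_, ?_, ?_, ?_, ?_⟩
  · -- symmetry
    intro k x b
    rw [hS, hS]
    congr 1
    rw [show (2:ℝ)^((k:ℝ)/(d:ℝ)) • (b - x) = -((2:ℝ)^((k:ℝ)/(d:ℝ)) • (x - b)) by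
      rw [← smul_neg, neg_sub], heven]
  · -- (C1)
    intro k x
    have hA : (0:ℝ) < (2:ℝ)^((k:ℝ)/(d:ℝ)) := Real.rpow_pos_of_pos two_pos _
    simp only [hS]
    rw [integral_const_mul]
    have h1 : ∫ (b : EuclideanSpace ℝ (Fin d)), σ (((2:ℝ)^((k:ℝ)/(d:ℝ))) • (x - b)) = ∫ u, σ (((2:ℝ)^((k:ℝ)/(d:ℝ))) • u) :=
      integral_sub_left_eq_self (fun u => σ (((2:ℝ)^((k:ℝ)/(d:ℝ))) • u)) volume x
    rw [h1, MeasureTheory.Measure.integral_comp_smul_of_nonneg volume σ _ (hR := hA.le),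
      hnorm, finrank_euclideanSpace_fin, smul_eq_mul, mul_one]
    have hAd : ((2:ℝ)^((k:ℝ)/(d:ℝ)))^d = (2:ℝ)^((k:ℝ)) := by
      rw [← Real.rpow_natCast ((2:ℝ)^((k:ℝ)/(d:ℝ))) d, ← Real.rpow_mul (by norm_num), div_mul_cancel₀ _ hd0]
    rw [hAd, ← Real.rpow_intCast 2 k]
    exact mul_inv_cancel₀ (Real.rpow_pos_of_pos two_pos _).ne'
  · -- (C2)
    intro k x b
    have hP : (0:ℝ) < (2:ℝ)^((k:ℝ)) := Real.rpow_pos_of_pos two_pos _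
    have hA : (0:ℝ) < (2:ℝ)^((k:ℝ)/(d:ℝ)) := Real.rpow_pos_of_pos two_pos _
    have h2k : ((2:ℝ)^k : ℝ) = (2:ℝ)^((k:ℝ)) := (Real.rpow_intCast 2 k).symm
    have h2mk : ((2:ℝ)^(-k) : ℝ) = ((2:ℝ)^((k:ℝ)))⁻¹ := by
      rw [← Real.rpow_intCast 2 (-k), Int.cast_neg, Real.rpow_neg (by norm_num)]
    have h2me : (2:ℝ)^(-(k:ℝ)*ε) = ((2:ℝ)^((k:ℝ))) ^ (-ε) := by
      rw [← Real.rpow_mul (by norm_num : (0:ℝ) ≤ 2)]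
      congr 1
      ring
    have hAd : ((2:ℝ)^((k:ℝ)/(d:ℝ)))^d = (2:ℝ)^((k:ℝ)) := by
      rw [← Real.rpow_natCast ((2:ℝ)^((k:ℝ)/(d:ℝ))) d, ← Real.rpow_mul (by norm_num), div_mul_cancel₀ _ hd0]
    have hsm : ∀ u : EuclideanSpace ℝ (Fin d), ‖((2:ℝ)^((k:ℝ)/(d:ℝ))) • u‖^d = (2:ℝ)^((k:ℝ)) * ‖u‖^d := by
      intro u
      rw [norm_smul, Real.norm_eq_abs, abs_of_pos hA, mul_pow, hAd]

    rw [hS, h2k, h2mk, h2me, abs_mul, abs_of_pos hP]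
    have hD : (0:ℝ) < ((2:ℝ)^((k:ℝ)))⁻¹ + c*‖x-b‖^d := by positivity
    have hiden : c⁻¹ + ‖((2:ℝ)^((k:ℝ)/(d:ℝ))) • (x-b)‖^d
        = (2:ℝ)^((k:ℝ)) * (((2:ℝ)^((k:ℝ)))⁻¹ + c*‖x-b‖^d)/c := by
      rw [hsm]
      field_simp
    calc ((2:ℝ)^((k:ℝ))) * |σ (((2:ℝ)^((k:ℝ)/(d:ℝ))) • (x-b))|
        ≤ ((2:ℝ)^((k:ℝ))) * (C' / (((2:ℝ)^((k:ℝ))) * (((2:ℝ)^((k:ℝ)))⁻¹ + c*‖x-b‖^d)/c) ^ ((1:ℝ)+ε)) := by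
          have h0 := hdec0 (((2:ℝ)^((k:ℝ)/(d:ℝ))) • (x-b))
          rw [hiden] at h0
          exact mul_le_mul_of_nonneg_left h0 hP.le
    _ ≤ (C' * (c * c^ε) * (1 + ((3:ℝ)^d * ((3:ℝ)^d)^ε * ((3:ℝ)^d)^((1:ℝ)/(d:ℝ))) + (((3:ℝ)^d)^2 * (((3:ℝ)^d)^2)^ε * (((3:ℝ)^d)^2)^((1:ℝ)/(d:ℝ)) * (((3:ℝ)^d)^2)^((1:ℝ)/(d:ℝ))))) * ((2:ℝ)^((k:ℝ)))^(-ε) / (((2:ℝ)^((k:ℝ)))⁻¹ + c*‖x-b‖^d) ^ ((1:ℝ)+ε) :=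
          boundA hC' hc hP hD hCb2
  · -- (C3)
    intro k x x' b hxx'
    have hP : (0:ℝ) < (2:ℝ)^((k:ℝ)) := Real.rpow_pos_of_pos two_pos _
    have hA : (0:ℝ) < (2:ℝ)^((k:ℝ)/(d:ℝ)) := Real.rpow_pos_of_pos two_pos _
    have h2k : ((2:ℝ)^k : ℝ) = (2:ℝ)^((k:ℝ)) := (Real.rpow_intCast 2 k).symm
    have h2mk : ((2:ℝ)^(-k) : ℝ) = ((2:ℝ)^((k:ℝ)))⁻¹ := by
      rw [← Real.rpow_intCast 2 (-k), Int.cast_neg, Real.rpow_neg (by norm_num)]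
    have h2me : (2:ℝ)^(-(k:ℝ)*ε) = ((2:ℝ)^((k:ℝ))) ^ (-ε) := by
      rw [← Real.rpow_mul (by norm_num : (0:ℝ) ≤ 2)]
      congr 1
      ring
    have hAd : ((2:ℝ)^((k:ℝ)/(d:ℝ)))^d = (2:ℝ)^((k:ℝ)) := by
      rw [← Real.rpow_natCast ((2:ℝ)^((k:ℝ)/(d:ℝ))) d, ← Real.rpow_mul (by norm_num), div_mul_cancel₀ _ hd0]
    have hsm : ∀ u : EuclideanSpace ℝ (Fin d), ‖((2:ℝ)^((k:ℝ)/(d:ℝ))) • u‖^d = (2:ℝ)^((k:ℝ)) * ‖u‖^d := by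
      intro u
      rw [norm_smul, Real.norm_eq_abs, abs_of_pos hA, mul_pow, hAd]

    simp only [hS]
    rw [h2k, h2mk, h2me]
    rw [h2mk] at hxx'
    rw [show ((3:ℝ)^(-(d:ℤ)) : ℝ) = ((3:ℝ)^d)⁻¹ by rw [zpow_neg, zpow_natCast]] at hxx'
    have hD : (0:ℝ) < ((2:ℝ)^((k:ℝ)))⁻¹ + c*‖x-b‖^d := by positivity
    set sv : ℝ := (((2:ℝ)^((k:ℝ)))⁻¹/c) ^ ((1:ℝ)/(d:ℝ)) with hsvdef
    have hsv : 0 < sv := by rw [hsvdef]; positivity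
    have hsvd : sv^d = ((2:ℝ)^((k:ℝ)))⁻¹/c := by rw [hsvdef]; exact rpow_pow_cancel (by positivity) hdn0
    have hTi : ((3:ℝ)^(-(d:ℤ)) : ℝ) = ((3:ℝ)^d)⁻¹ := by rw [zpow_neg, zpow_natCast]
    have hA2 : ((2:ℝ)^((k:ℝ))) ^ ((1:ℝ)/(d:ℝ)) = (2:ℝ)^((k:ℝ)/(d:ℝ)) := by
      rw [← Real.rpow_mul (by norm_num : (0:ℝ) ≤ 2), mul_one_div]
    have hAid : ‖((2:ℝ)^((k:ℝ)/(d:ℝ))) • ContinuousLinearMap.id ℝ (EuclideanSpace ℝ (Fin d))‖ ≤ (2:ℝ)^((k:ℝ)/(d:ℝ)) := by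
      refine le_trans (ContinuousLinearMap.opNorm_smul_le _ _) ?_
      rw [Real.norm_eq_abs, abs_of_pos hA]
      calc ((2:ℝ)^((k:ℝ)/(d:ℝ))) * ‖ContinuousLinearMap.id ℝ (EuclideanSpace ℝ (Fin d))‖ ≤ ((2:ℝ)^((k:ℝ)/(d:ℝ))) * 1 := by
            gcongr
            exact ContinuousLinearMap.norm_id_le
      _ = (2:ℝ)^((k:ℝ)/(d:ℝ)) := mul_one _

    have hhd : ‖x-x'‖^d ≤ (((3:ℝ)^d)⁻¹ : ℝ) * (sv^d + ‖x-b‖^d) := by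
      calc ‖x-x'‖^d = c * ‖x-x'‖^d / c := by field_simp
      _ ≤ ((3:ℝ)^d)⁻¹ * ((((2:ℝ)^((k:ℝ)))⁻¹ + c*‖x-b‖^d)) / c := by gcongr
      _ = ((3:ℝ)^d)⁻¹ * (sv^d + ‖x-b‖^d) := by rw [hsvd]; field_simp

    have hlow : ∀ ξ ∈ segment ℝ x' x,
        ((2:ℝ)^((k:ℝ))) * ((((2:ℝ)^((k:ℝ)))⁻¹ + c*‖x-b‖^d)) / (c*((3:ℝ)^d)) ≤ c⁻¹ + ‖((2:ℝ)^((k:ℝ)/(d:ℝ))) • (ξ-b)‖^d := by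
      intro ξ hξ
      have hw : ‖x-b‖ - ‖x-x'‖ ≤ ‖ξ-b‖ := by
        have t1 : ‖x-b‖ ≤ ‖x-ξ‖ + ‖ξ-b‖ := by
          calc ‖x-b‖ = ‖(x-ξ)+(ξ-b)‖ := by rw [sub_add_sub_cancel]
          _ ≤ ‖x-ξ‖ + ‖ξ-b‖ := norm_add_le _ _
        linarith [seg_aux hξ]
      have hkey := keyA d hd hsv (norm_nonneg (x-b)) (norm_nonneg (x-x'))
        (norm_nonneg (ξ-b)) hhd hw
      have e : c⁻¹ + ‖((2:ℝ)^((k:ℝ)/(d:ℝ))) • (ξ-b)‖^d = ((2:ℝ)^((k:ℝ))) * (sv^d + ‖ξ-b‖^d) := by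
        rw [hsm (ξ-b), hsvd]
        field_simp
      have e2 : ((2:ℝ)^((k:ℝ))) * ((((2:ℝ)^((k:ℝ)))⁻¹ + c*‖x-b‖^d)) / (c*((3:ℝ)^d))
          = ((2:ℝ)^((k:ℝ))) * ((((3:ℝ)^d)⁻¹ : ℝ) * (sv^d + ‖x-b‖^d)) := by
        rw [hsvd]
        field_simp
      rw [e, e2]
      exact mul_le_mul_of_nonneg_left hkey hP.le
    have hM : ∀ ξ ∈ segment ℝ x' x,
        ‖(fderiv ℝ σ (((2:ℝ)^((k:ℝ)/(d:ℝ))) • (ξ - b))).comp (((2:ℝ)^((k:ℝ)/(d:ℝ))) • ContinuousLinearMap.id ℝ (EuclideanSpace ℝ (Fin d)))‖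
          ≤ ((2:ℝ)^((k:ℝ)/(d:ℝ))) * (C' / (((2:ℝ)^((k:ℝ))) * ((((2:ℝ)^((k:ℝ)))⁻¹ + c*‖x-b‖^d)) / (c*((3:ℝ)^d))) ^ ((1:ℝ)+ε+1/(d:ℝ))) := by
      intro ξ hξ
      have hQ : (0:ℝ) < ((2:ℝ)^((k:ℝ))) * ((((2:ℝ)^((k:ℝ)))⁻¹ + c*‖x-b‖^d)) / (c*((3:ℝ)^d)) := by positivity
      have h1 : (((2:ℝ)^((k:ℝ))) * ((((2:ℝ)^((k:ℝ)))⁻¹ + c*‖x-b‖^d)) / (c*((3:ℝ)^d))) ^ ((1:ℝ)+ε+1/(d:ℝ))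
          ≤ (c⁻¹ + ‖((2:ℝ)^((k:ℝ)/(d:ℝ))) • (ξ-b)‖^d) ^ ((1:ℝ)+ε+1/(d:ℝ)) :=
        Real.rpow_le_rpow hQ.le (hlow ξ hξ) (by positivity)
      calc ‖(fderiv ℝ σ (((2:ℝ)^((k:ℝ)/(d:ℝ))) • (ξ - b))).comp (((2:ℝ)^((k:ℝ)/(d:ℝ))) • ContinuousLinearMap.id ℝ (EuclideanSpace ℝ (Fin d)))‖
          ≤ ‖fderiv ℝ σ (((2:ℝ)^((k:ℝ)/(d:ℝ))) • (ξ - b))‖ * ‖((2:ℝ)^((k:ℝ)/(d:ℝ))) • ContinuousLinearMap.id ℝ (EuclideanSpace ℝ (Fin d))‖ :=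
            ContinuousLinearMap.opNorm_comp_le _ _
      _ ≤ (C' / (c⁻¹ + ‖((2:ℝ)^((k:ℝ)/(d:ℝ))) • (ξ-b)‖^d) ^ ((1:ℝ)+ε+1/(d:ℝ))) * ((2:ℝ)^((k:ℝ)/(d:ℝ))) :=
            mul_le_mul (hdec1 _) hAid (norm_nonneg _) (by positivity)
      _ ≤ (C' / (((2:ℝ)^((k:ℝ))) * ((((2:ℝ)^((k:ℝ)))⁻¹ + c*‖x-b‖^d)) / (c*((3:ℝ)^d))) ^ ((1:ℝ)+ε+1/(d:ℝ))) * ((2:ℝ)^((k:ℝ)/(d:ℝ))) := by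
            gcongr
      _ = ((2:ℝ)^((k:ℝ)/(d:ℝ))) * (C' / (((2:ℝ)^((k:ℝ))) * ((((2:ℝ)^((k:ℝ)))⁻¹ + c*‖x-b‖^d)) / (c*((3:ℝ)^d))) ^ ((1:ℝ)+ε+1/(d:ℝ))) := mul_comm _ _
    have hmvt := Convex.norm_image_sub_le_of_norm_hasFDerivWithin_le
      (f := fun ζ : EuclideanSpace ℝ (Fin d) => σ (((2:ℝ)^((k:ℝ)/(d:ℝ))) • (ζ - b)))
      (f' := fun ξ : EuclideanSpace ℝ (Fin d) => (fderiv ℝ σ (((2:ℝ)^((k:ℝ)/(d:ℝ))) • (ξ - b))).comp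
        (((2:ℝ)^((k:ℝ)/(d:ℝ))) • ContinuousLinearMap.id ℝ (EuclideanSpace ℝ (Fin d))))
      (fun ξ _ => ((hσdiff _).hasFDerivAt.comp ξ
        (((hasFDerivAt_id ξ).sub_const b).const_smul ((2:ℝ)^((k:ℝ)/(d:ℝ))))).hasFDerivWithinAt)
      hM (convex_segment x' x) (left_mem_segment ℝ x' x) (right_mem_segment ℝ x' x)
    rw [show ((2:ℝ)^((k:ℝ))) * σ (((2:ℝ)^((k:ℝ)/(d:ℝ))) • (x-b)) - ((2:ℝ)^((k:ℝ))) * σ (((2:ℝ)^((k:ℝ)/(d:ℝ))) • (x'-b))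
        = ((2:ℝ)^((k:ℝ))) * (σ (((2:ℝ)^((k:ℝ)/(d:ℝ))) • (x-b)) - σ (((2:ℝ)^((k:ℝ)/(d:ℝ))) • (x'-b))) by ring, abs_mul, abs_of_pos hP]
    calc ((2:ℝ)^((k:ℝ))) * |σ (((2:ℝ)^((k:ℝ)/(d:ℝ))) • (x-b)) - σ (((2:ℝ)^((k:ℝ)/(d:ℝ))) • (x'-b))|
        ≤ ((2:ℝ)^((k:ℝ))) * (((2:ℝ)^((k:ℝ)/(d:ℝ))) * (C' / (((2:ℝ)^((k:ℝ))) * ((((2:ℝ)^((k:ℝ)))⁻¹ + c*‖x-b‖^d)) / (c*((3:ℝ)^d))) ^ ((1:ℝ)+ε+1/(d:ℝ))) * ‖x-x'‖) := by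
          refine mul_le_mul_of_nonneg_left ?_ hP.le
          rw [← Real.norm_eq_abs]
          exact hmvt
    _ = ((2:ℝ)^((k:ℝ))) * ((((2:ℝ)^((k:ℝ))) ^ ((1:ℝ)/(d:ℝ))) * (C' / (((2:ℝ)^((k:ℝ))) * ((((2:ℝ)^((k:ℝ)))⁻¹ + c*‖x-b‖^d)) / (c*((3:ℝ)^d))) ^ ((1:ℝ)+ε+1/(d:ℝ))) * ‖x-x'‖) := by
          rw [hA2]
    _ ≤ (C' * (c * c^ε) * (1 + ((3:ℝ)^d * ((3:ℝ)^d)^ε * ((3:ℝ)^d)^((1:ℝ)/(d:ℝ))) + (((3:ℝ)^d)^2 * (((3:ℝ)^d)^2)^ε * (((3:ℝ)^d)^2)^((1:ℝ)/(d:ℝ)) * (((3:ℝ)^d)^2)^((1:ℝ)/(d:ℝ))))) * (c*‖x-x'‖^d/(((2:ℝ)^((k:ℝ)))⁻¹ + c*‖x-b‖^d)) ^ ((1:ℝ)/(d:ℝ))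
          * (((2:ℝ)^((k:ℝ)))^(-ε)/(((2:ℝ)^((k:ℝ)))⁻¹ + c*‖x-b‖^d) ^ ((1:ℝ)+ε)) :=
        boundB hd hC' hc hP hD (norm_nonneg _) hT hCb3
  · -- (C4)
    intro k x x' b b' hxx' hbb'
    have hP : (0:ℝ) < (2:ℝ)^((k:ℝ)) := Real.rpow_pos_of_pos two_pos _
    have hA : (0:ℝ) < (2:ℝ)^((k:ℝ)/(d:ℝ)) := Real.rpow_pos_of_pos two_pos _
    have h2k : ((2:ℝ)^k : ℝ) = (2:ℝ)^((k:ℝ)) := (Real.rpow_intCast 2 k).symm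
    have h2mk : ((2:ℝ)^(-k) : ℝ) = ((2:ℝ)^((k:ℝ)))⁻¹ := by
      rw [← Real.rpow_intCast 2 (-k), Int.cast_neg, Real.rpow_neg (by norm_num)]
    have h2me : (2:ℝ)^(-(k:ℝ)*ε) = ((2:ℝ)^((k:ℝ))) ^ (-ε) := by
      rw [← Real.rpow_mul (by norm_num : (0:ℝ) ≤ 2)]
      congr 1
      ring
    have hAd : ((2:ℝ)^((k:ℝ)/(d:ℝ)))^d = (2:ℝ)^((k:ℝ)) := by
      rw [← Real.rpow_natCast ((2:ℝ)^((k:ℝ)/(d:ℝ))) d, ← Real.rpow_mul (by norm_num), div_mul_cancel₀ _ hd0]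
    have hsm : ∀ u : EuclideanSpace ℝ (Fin d), ‖((2:ℝ)^((k:ℝ)/(d:ℝ))) • u‖^d = (2:ℝ)^((k:ℝ)) * ‖u‖^d := by
      intro u
      rw [norm_smul, Real.norm_eq_abs, abs_of_pos hA, mul_pow, hAd]

    simp only [hS]
    rw [h2k, h2mk, h2me]
    rw [h2mk] at hxx' hbb'
    rw [show ((3:ℝ)^(-(d:ℤ)) : ℝ) = ((3:ℝ)^d)⁻¹ by rw [zpow_neg, zpow_natCast]] at hxx' hbb'
    have hD : (0:ℝ) < ((2:ℝ)^((k:ℝ)))⁻¹ + c*‖x-b‖^d := by positivity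
    set sv : ℝ := (((2:ℝ)^((k:ℝ)))⁻¹/c) ^ ((1:ℝ)/(d:ℝ)) with hsvdef
    have hsv : 0 < sv := by rw [hsvdef]; positivity
    have hsvd : sv^d = ((2:ℝ)^((k:ℝ)))⁻¹/c := by rw [hsvdef]; exact rpow_pow_cancel (by positivity) hdn0
    have hTi : ((3:ℝ)^(-(d:ℤ)) : ℝ) = ((3:ℝ)^d)⁻¹ := by rw [zpow_neg, zpow_natCast]
    have hA2 : ((2:ℝ)^((k:ℝ))) ^ ((1:ℝ)/(d:ℝ)) = (2:ℝ)^((k:ℝ)/(d:ℝ)) := by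
      rw [← Real.rpow_mul (by norm_num : (0:ℝ) ≤ 2), mul_one_div]
    have hAid : ‖((2:ℝ)^((k:ℝ)/(d:ℝ))) • ContinuousLinearMap.id ℝ (EuclideanSpace ℝ (Fin d))‖ ≤ (2:ℝ)^((k:ℝ)/(d:ℝ)) := by
      refine le_trans (ContinuousLinearMap.opNorm_smul_le _ _) ?_
      rw [Real.norm_eq_abs, abs_of_pos hA]
      calc ((2:ℝ)^((k:ℝ)/(d:ℝ))) * ‖ContinuousLinearMap.id ℝ (EuclideanSpace ℝ (Fin d))‖ ≤ ((2:ℝ)^((k:ℝ)/(d:ℝ))) * 1 := by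
            gcongr
            exact ContinuousLinearMap.norm_id_le
      _ = (2:ℝ)^((k:ℝ)/(d:ℝ)) := mul_one _

    have hhd1 : ‖x-x'‖^d ≤ (((3:ℝ)^d)⁻¹ : ℝ) * (sv^d + ‖x-b‖^d) := by
      calc ‖x-x'‖^d = c * ‖x-x'‖^d / c := by field_simp
      _ ≤ ((3:ℝ)^d)⁻¹ * ((((2:ℝ)^((k:ℝ)))⁻¹ + c*‖x-b‖^d)) / c := by gcongr
      _ = ((3:ℝ)^d)⁻¹ * (sv^d + ‖x-b‖^d) := by rw [hsvd]; field_simp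

    have hhd2 : ‖b-b'‖^d ≤ (((3:ℝ)^d)⁻¹ : ℝ) * (sv^d + ‖x-b‖^d) := by
      calc ‖b-b'‖^d = c * ‖b-b'‖^d / c := by field_simp
      _ ≤ ((3:ℝ)^d)⁻¹ * ((((2:ℝ)^((k:ℝ)))⁻¹ + c*‖x-b‖^d)) / c := by gcongr
      _ = ((3:ℝ)^d)⁻¹ * (sv^d + ‖x-b‖^d) := by rw [hsvd]; field_simp

    have hT2 : (0:ℝ) < ((3:ℝ)^d)^2 := by positivity
    have hlow : ∀ ξ ∈ segment ℝ x' x, ∀ β ∈ segment ℝ b' b,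
        ((2:ℝ)^((k:ℝ))) * ((((2:ℝ)^((k:ℝ)))⁻¹ + c*‖x-b‖^d)) / (c*(((3:ℝ)^d)^2)) ≤ c⁻¹ + ‖((2:ℝ)^((k:ℝ)/(d:ℝ))) • (ξ-β)‖^d := by
      intro ξ hξ β hβ
      have hw : ‖x-b‖ - ‖x-x'‖ - ‖b-b'‖ ≤ ‖ξ-β‖ := by
        have t1 : ‖x-b‖ ≤ ‖x-ξ‖ + ‖ξ-β‖ + ‖β-b‖ := by
          calc ‖x-b‖ = ‖(x-ξ)+(ξ-β)+(β-b)‖ := by rw [sub_add_sub_cancel, sub_add_sub_cancel]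
          _ ≤ ‖(x-ξ)+(ξ-β)‖ + ‖β-b‖ := norm_add_le _ _
          _ ≤ ‖x-ξ‖ + ‖ξ-β‖ + ‖β-b‖ := by
                have := norm_add_le (x-ξ) (ξ-β)
                linarith
        have t2 := seg_aux hξ
        have t3 := seg_aux hβ
        rw [norm_sub_rev β b] at t1
        linarith
      have hkey := keyB d hd hsv (norm_nonneg (x-b)) (norm_nonneg (x-x'))
        (norm_nonneg (b-b')) (norm_nonneg (ξ-β)) hhd1 hhd2 hw
      have e : c⁻¹ + ‖((2:ℝ)^((k:ℝ)/(d:ℝ))) • (ξ-β)‖^d = ((2:ℝ)^((k:ℝ))) * (sv^d + ‖ξ-β‖^d) := by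
        rw [hsm (ξ-β), hsvd]
        field_simp
      have e2 : ((2:ℝ)^((k:ℝ))) * ((((2:ℝ)^((k:ℝ)))⁻¹ + c*‖x-b‖^d)) / (c*(((3:ℝ)^d)^2))
          = ((2:ℝ)^((k:ℝ))) * (((((3:ℝ)^d)^2)⁻¹ : ℝ) * (sv^d + ‖x-b‖^d)) := by
        rw [hsvd]
        field_simp
      rw [e, e2]
      exact mul_le_mul_of_nonneg_left hkey hP.le
    have hMg : ∀ ξ ∈ segment ℝ x' x,
        ‖((fderiv ℝ σ (((2:ℝ)^((k:ℝ)/(d:ℝ))) • (ξ - b))) - (fderiv ℝ σ (((2:ℝ)^((k:ℝ)/(d:ℝ))) • (ξ - b')))).comp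
            (((2:ℝ)^((k:ℝ)/(d:ℝ))) • ContinuousLinearMap.id ℝ (EuclideanSpace ℝ (Fin d)))‖
          ≤ ((2:ℝ)^((k:ℝ)/(d:ℝ))) * (((2:ℝ)^((k:ℝ)/(d:ℝ))) * (C' / (((2:ℝ)^((k:ℝ))) * ((((2:ℝ)^((k:ℝ)))⁻¹ + c*‖x-b‖^d)) / (c*(((3:ℝ)^d)^2))) ^ ((1:ℝ)+ε+2/(d:ℝ))) * ‖b-b'‖) := by
      intro ξ hξ
      have hQ : (0:ℝ) < ((2:ℝ)^((k:ℝ))) * ((((2:ℝ)^((k:ℝ)))⁻¹ + c*‖x-b‖^d)) / (c*(((3:ℝ)^d)^2)) := by positivity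
      have hAidneg : ‖((2:ℝ)^((k:ℝ)/(d:ℝ))) • -ContinuousLinearMap.id ℝ (EuclideanSpace ℝ (Fin d))‖ ≤ (2:ℝ)^((k:ℝ)/(d:ℝ)) := by
        refine le_trans (ContinuousLinearMap.opNorm_smul_le _ _) ?_
        rw [Real.norm_eq_abs, abs_of_pos hA, norm_neg]
        calc ((2:ℝ)^((k:ℝ)/(d:ℝ))) * ‖ContinuousLinearMap.id ℝ (EuclideanSpace ℝ (Fin d))‖ ≤ ((2:ℝ)^((k:ℝ)/(d:ℝ))) * 1 := by
              gcongr
              exact ContinuousLinearMap.norm_id_le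
        _ = (2:ℝ)^((k:ℝ)/(d:ℝ)) := mul_one _
      have hMin : ∀ β ∈ segment ℝ b' b,
          ‖(fderiv ℝ (fderiv ℝ σ) (((2:ℝ)^((k:ℝ)/(d:ℝ))) • (ξ - β))).comp
              (((2:ℝ)^((k:ℝ)/(d:ℝ))) • -ContinuousLinearMap.id ℝ (EuclideanSpace ℝ (Fin d)))‖
            ≤ ((2:ℝ)^((k:ℝ)/(d:ℝ))) * (C' / (((2:ℝ)^((k:ℝ))) * ((((2:ℝ)^((k:ℝ)))⁻¹ + c*‖x-b‖^d)) / (c*(((3:ℝ)^d)^2))) ^ ((1:ℝ)+ε+2/(d:ℝ))) := by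
        intro β hβ
        calc ‖(fderiv ℝ (fderiv ℝ σ) (((2:ℝ)^((k:ℝ)/(d:ℝ))) • (ξ - β))).comp
              (((2:ℝ)^((k:ℝ)/(d:ℝ))) • -ContinuousLinearMap.id ℝ (EuclideanSpace ℝ (Fin d)))‖
            ≤ ‖fderiv ℝ (fderiv ℝ σ) (((2:ℝ)^((k:ℝ)/(d:ℝ))) • (ξ - β))‖ * ‖((2:ℝ)^((k:ℝ)/(d:ℝ))) • -ContinuousLinearMap.id ℝ (EuclideanSpace ℝ (Fin d))‖ :=
              ContinuousLinearMap.opNorm_comp_le _ _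
        _ ≤ (C' / (c⁻¹ + ‖((2:ℝ)^((k:ℝ)/(d:ℝ))) • (ξ-β)‖^d) ^ ((1:ℝ)+ε+2/(d:ℝ))) * ((2:ℝ)^((k:ℝ)/(d:ℝ))) :=
              mul_le_mul (hdec2 _) hAidneg (norm_nonneg _) (by positivity)
        _ ≤ (C' / (((2:ℝ)^((k:ℝ))) * ((((2:ℝ)^((k:ℝ)))⁻¹ + c*‖x-b‖^d)) / (c*(((3:ℝ)^d)^2))) ^ ((1:ℝ)+ε+2/(d:ℝ))) * ((2:ℝ)^((k:ℝ)/(d:ℝ))) := by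
              gcongr
              exact hlow ξ hξ β hβ
        _ = ((2:ℝ)^((k:ℝ)/(d:ℝ))) * (C' / (((2:ℝ)^((k:ℝ))) * ((((2:ℝ)^((k:ℝ)))⁻¹ + c*‖x-b‖^d)) / (c*(((3:ℝ)^d)^2))) ^ ((1:ℝ)+ε+2/(d:ℝ))) := mul_comm _ _
      have hmvtin := Convex.norm_image_sub_le_of_norm_hasFDerivWithin_le
        (f := fun β : EuclideanSpace ℝ (Fin d) => fderiv ℝ σ (((2:ℝ)^((k:ℝ)/(d:ℝ))) • (ξ - β)))
        (f' := fun β : EuclideanSpace ℝ (Fin d) => (fderiv ℝ (fderiv ℝ σ) (((2:ℝ)^((k:ℝ)/(d:ℝ))) • (ξ - β))).comp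
          (((2:ℝ)^((k:ℝ)/(d:ℝ))) • -ContinuousLinearMap.id ℝ (EuclideanSpace ℝ (Fin d))))
        (fun β _ => ((hσ'diff _).hasFDerivAt.comp β
          (((hasFDerivAt_id β).const_sub ξ).const_smul ((2:ℝ)^((k:ℝ)/(d:ℝ))))).hasFDerivWithinAt)
        hMin (convex_segment b' b) (left_mem_segment ℝ b' b) (right_mem_segment ℝ b' b)
      calc ‖((fderiv ℝ σ (((2:ℝ)^((k:ℝ)/(d:ℝ))) • (ξ - b))) - (fderiv ℝ σ (((2:ℝ)^((k:ℝ)/(d:ℝ))) • (ξ - b')))).comp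
            (((2:ℝ)^((k:ℝ)/(d:ℝ))) • ContinuousLinearMap.id ℝ (EuclideanSpace ℝ (Fin d)))‖
          ≤ ‖(fderiv ℝ σ (((2:ℝ)^((k:ℝ)/(d:ℝ))) • (ξ - b))) - (fderiv ℝ σ (((2:ℝ)^((k:ℝ)/(d:ℝ))) • (ξ - b')))‖
              * ‖((2:ℝ)^((k:ℝ)/(d:ℝ))) • ContinuousLinearMap.id ℝ (EuclideanSpace ℝ (Fin d))‖ :=
            ContinuousLinearMap.opNorm_comp_le _ _
      _ ≤ (((2:ℝ)^((k:ℝ)/(d:ℝ))) * (C' / (((2:ℝ)^((k:ℝ))) * ((((2:ℝ)^((k:ℝ)))⁻¹ + c*‖x-b‖^d)) / (c*(((3:ℝ)^d)^2))) ^ ((1:ℝ)+ε+2/(d:ℝ))) * ‖b-b'‖) * ((2:ℝ)^((k:ℝ)/(d:ℝ))) :=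
            mul_le_mul hmvtin hAid (norm_nonneg _) (by positivity)
      _ = ((2:ℝ)^((k:ℝ)/(d:ℝ))) * (((2:ℝ)^((k:ℝ)/(d:ℝ))) * (C' / (((2:ℝ)^((k:ℝ))) * ((((2:ℝ)^((k:ℝ)))⁻¹ + c*‖x-b‖^d)) / (c*(((3:ℝ)^d)^2))) ^ ((1:ℝ)+ε+2/(d:ℝ))) * ‖b-b'‖) := by
            ring
    have hmvt := Convex.norm_image_sub_le_of_norm_hasFDerivWithin_le
      (f := fun ζ : EuclideanSpace ℝ (Fin d) => σ (((2:ℝ)^((k:ℝ)/(d:ℝ))) • (ζ - b)) - σ (((2:ℝ)^((k:ℝ)/(d:ℝ))) • (ζ - b')))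
      (f' := fun ξ : EuclideanSpace ℝ (Fin d) => ((fderiv ℝ σ (((2:ℝ)^((k:ℝ)/(d:ℝ))) • (ξ - b))) - (fderiv ℝ σ (((2:ℝ)^((k:ℝ)/(d:ℝ))) • (ξ - b')))).comp
        (((2:ℝ)^((k:ℝ)/(d:ℝ))) • ContinuousLinearMap.id ℝ (EuclideanSpace ℝ (Fin d))))
      (fun ξ _ => by
        have h1 := (hσdiff _).hasFDerivAt.comp ξ
          (((hasFDerivAt_id ξ).sub_const b).const_smul ((2:ℝ)^((k:ℝ)/(d:ℝ))))
        have h2 := (hσdiff _).hasFDerivAt.comp ξ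
          (((hasFDerivAt_id ξ).sub_const b').const_smul ((2:ℝ)^((k:ℝ)/(d:ℝ))))
        have h3 := h1.sub h2
        rw [← ContinuousLinearMap.sub_comp] at h3
        exact h3.hasFDerivWithinAt)
      hMg (convex_segment x' x) (left_mem_segment ℝ x' x) (right_mem_segment ℝ x' x)
    rw [show ((2:ℝ)^((k:ℝ))) * σ (((2:ℝ)^((k:ℝ)/(d:ℝ))) • (x-b)) - ((2:ℝ)^((k:ℝ))) * σ (((2:ℝ)^((k:ℝ)/(d:ℝ))) • (x'-b))
          - ((2:ℝ)^((k:ℝ))) * σ (((2:ℝ)^((k:ℝ)/(d:ℝ))) • (x-b')) + ((2:ℝ)^((k:ℝ))) * σ (((2:ℝ)^((k:ℝ)/(d:ℝ))) • (x'-b'))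
        = ((2:ℝ)^((k:ℝ))) * ((σ (((2:ℝ)^((k:ℝ)/(d:ℝ))) • (x-b)) - σ (((2:ℝ)^((k:ℝ)/(d:ℝ))) • (x-b')))
            - (σ (((2:ℝ)^((k:ℝ)/(d:ℝ))) • (x'-b)) - σ (((2:ℝ)^((k:ℝ)/(d:ℝ))) • (x'-b')))) by ring, abs_mul, abs_of_pos hP]
    calc ((2:ℝ)^((k:ℝ))) * |(σ (((2:ℝ)^((k:ℝ)/(d:ℝ))) • (x-b)) - σ (((2:ℝ)^((k:ℝ)/(d:ℝ))) • (x-b')))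
            - (σ (((2:ℝ)^((k:ℝ)/(d:ℝ))) • (x'-b)) - σ (((2:ℝ)^((k:ℝ)/(d:ℝ))) • (x'-b')))|
        ≤ ((2:ℝ)^((k:ℝ))) * (((2:ℝ)^((k:ℝ)/(d:ℝ))) * (((2:ℝ)^((k:ℝ)/(d:ℝ))) * (C' / (((2:ℝ)^((k:ℝ))) * ((((2:ℝ)^((k:ℝ)))⁻¹ + c*‖x-b‖^d)) / (c*(((3:ℝ)^d)^2))) ^ ((1:ℝ)+ε+2/(d:ℝ))) * ‖b-b'‖) * ‖x-x'‖) := by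
          refine mul_le_mul_of_nonneg_left ?_ hP.le
          rw [← Real.norm_eq_abs]
          exact hmvt
    _ = ((2:ℝ)^((k:ℝ))) * ((((2:ℝ)^((k:ℝ))) ^ ((1:ℝ)/(d:ℝ))) * ((((2:ℝ)^((k:ℝ))) ^ ((1:ℝ)/(d:ℝ))) * (C' / (((2:ℝ)^((k:ℝ))) * ((((2:ℝ)^((k:ℝ)))⁻¹ + c*‖x-b‖^d)) / (c*(((3:ℝ)^d)^2))) ^ ((1:ℝ)+ε+2/(d:ℝ))) * ‖b-b'‖) * ‖x-x'‖) := by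
          rw [hA2]
    _ ≤ (C' * (c * c^ε) * (1 + ((3:ℝ)^d * ((3:ℝ)^d)^ε * ((3:ℝ)^d)^((1:ℝ)/(d:ℝ))) + (((3:ℝ)^d)^2 * (((3:ℝ)^d)^2)^ε * (((3:ℝ)^d)^2)^((1:ℝ)/(d:ℝ)) * (((3:ℝ)^d)^2)^((1:ℝ)/(d:ℝ))))) * (c*‖x-x'‖^d/(((2:ℝ)^((k:ℝ)))⁻¹ + c*‖x-b‖^d)) ^ ((1:ℝ)/(d:ℝ))
          * (c*‖b-b'‖^d/(((2:ℝ)^((k:ℝ)))⁻¹ + c*‖x-b‖^d)) ^ ((1:ℝ)/(d:ℝ))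
          * (((2:ℝ)^((k:ℝ)))^(-ε)/(((2:ℝ)^((k:ℝ)))⁻¹ + c*‖x-b‖^d) ^ ((1:ℝ)+ε)) :=
        boundC hd hC' hc hP hD (norm_nonneg _) (norm_nonneg _) hT2 hCb4
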